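/- Let (C, ∘) be a pre-Lie algebra over a field k of characteristic 0. Then there exist a Lie algebra L over k, a Rota–Baxter operator P : L → L of weight 0 (i.e., [P(x),P(y)] = P([P(x),y] + [x,P(y)]) for all x, y ∈ L), and an injective linear map ι : C → L such that ι(x ∘ y) = [P(ι(x)), ι(y)] for all x, y ∈ C. -/

import Mathlib

universe u v

section Aux

variable {k : Type u} [Field k] {C : Type v} [AddCommGroup C] [Module k C]

theorem key_aux (mul : C →ₗ[k] C →ₗ[k] C)
    (hpre : ∀ x₁ x₂ x₃ : C,
      mul (mul x₁ x₂) x₃ - mul x₁ (mul x₂ x₃) = mul (mul x₂ x₁) x₃ - mul x₂ (mul x₁ x₃))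
    (a b c : C) :
    mul (mul a b - mul b a) c = mul a (mul b c) - mul b (mul a c) := by
  have h := hpre a b c
  rw [sub_eq_sub_iff_sub_eq_sub] at h
  simpa [map_sub, LinearMap.sub_apply] using h

def lieRingAux (mul : C →ₗ[k] C →ₗ[k] C)
    (hpre : ∀ x₁ x₂ x₃ : C,
      mul (mul x₁ x₂) x₃ - mul x₁ (mul x₂ x₃) = mul (mul x₂ x₁) x₃ - mul x₂ (mul x₁ x₃)) :
    LieRing (ULift.{u} (C × C)) :=
  { (inferInstance : AddCommGroup (ULift.{u} (C × C))) with
    bracket := fun x y =>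
      ⟨(mul x.down.1 y.down.1 - mul y.down.1 x.down.1,
        mul x.down.1 y.down.2 - mul y.down.1 x.down.2)⟩
    add_lie := by
      intro x y z
      refine ULift.ext _ _ ?_
      show (mul (x + y).down.1 z.down.1 - mul z.down.1 (x + y).down.1,
            mul (x + y).down.1 z.down.2 - mul z.down.1 (x + y).down.2)
        = ((mul x.down.1 z.down.1 - mul z.down.1 x.down.1,
            mul x.down.1 z.down.2 - mul z.down.1 x.down.2) : C × C)
          + (mul y.down.1 z.down.1 - mul z.down.1 y.down.1,
             mul y.down.1 z.down.2 - mul z.down.1 y.down.2)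
      simp only [ULift.add_down, Prod.fst_add, Prod.snd_add, map_add, LinearMap.add_apply,
        Prod.mk_add_mk, Prod.mk.injEq]
      constructor <;> abel
    lie_add := by
      intro x y z
      refine ULift.ext _ _ ?_
      show (mul x.down.1 (y + z).down.1 - mul (y + z).down.1 x.down.1,
            mul x.down.1 (y + z).down.2 - mul (y + z).down.1 x.down.2)
        = ((mul x.down.1 y.down.1 - mul y.down.1 x.down.1,
            mul x.down.1 y.down.2 - mul y.down.1 x.down.2) : C × C)
          + (mul x.down.1 z.down.1 - mul z.down.1 x.down.1,
             mul x.down.1 z.down.2 - mul z.down.1 x.down.2)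
      simp only [ULift.add_down, Prod.fst_add, Prod.snd_add, map_add, LinearMap.add_apply,
        Prod.mk_add_mk, Prod.mk.injEq]
      constructor <;> abel
    lie_self := by
      intro x
      refine ULift.ext _ _ ?_
      show (mul x.down.1 x.down.1 - mul x.down.1 x.down.1,
            mul x.down.1 x.down.2 - mul x.down.1 x.down.2) = ((0 : ULift.{u} (C × C))).down
      simp [ULift.zero_down]
    leibniz_lie := by
      intro x y z
      have K := key_aux mul hpre
      refine ULift.ext _ _ ?_
      set a := x.down.1
      set b := y.down.1
      set c := z.down.1
      set m := x.down.2
      set n := y.down.2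
      set p := z.down.2
      show (mul a (mul b c - mul c b) - mul (mul b c - mul c b) a,
            mul a (mul b p - mul c n) - mul (mul b c - mul c b) m)
        = ((mul (mul a b - mul b a) c - mul c (mul a b - mul b a),
            mul (mul a b - mul b a) p - mul c (mul a n - mul b m)) : C × C)
          + (mul b (mul a c - mul c a) - mul (mul a c - mul c a) b,
             mul b (mul a p - mul c m) - mul (mul a c - mul c a) n)
      simp only [K]
      simp only [map_sub, LinearMap.sub_apply, Prod.mk_add_mk, Prod.mk.injEq]
      constructor <;> abel }

def lieAlgebraAux (mul : C →ₗ[k] C →ₗ[k] C)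
    (hpre : ∀ x₁ x₂ x₃ : C,
      mul (mul x₁ x₂) x₃ - mul x₁ (mul x₂ x₃) = mul (mul x₂ x₁) x₃ - mul x₂ (mul x₁ x₃)) :
    @LieAlgebra k (ULift.{u} (C × C)) _ (lieRingAux mul hpre) :=
  letI := lieRingAux mul hpre
  { (inferInstance : Module k (ULift.{u} (C × C))) with
    lie_smul := by
      intro t x y
      refine ULift.ext _ _ ?_
      show (mul x.down.1 (t • y).down.1 - mul (t • y).down.1 x.down.1,
            mul x.down.1 (t • y).down.2 - mul (t • y).down.1 x.down.2)
        = (t • (⟨(mul x.down.1 y.down.1 - mul y.down.1 x.down.1,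
            mul x.down.1 y.down.2 - mul y.down.1 x.down.2)⟩ : ULift.{u} (C × C))).down
      simp [ULift.smul_down, Prod.smul_mk, smul_sub] }

end Aux

theorem stmt12 {k : Type u} [Field k] [CharZero k]
    {C : Type v} [AddCommGroup C] [Module k C]
    (mul : C →ₗ[k] C →ₗ[k] C)
    (hpre : ∀ x₁ x₂ x₃ : C,
      mul (mul x₁ x₂) x₃ - mul x₁ (mul x₂ x₃) = mul (mul x₂ x₁) x₃ - mul x₂ (mul x₁ x₃)) :
    ∃ (L : Type (max u v)) (_ : LieRing L) (_ : LieAlgebra k L)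
      (P : L →ₗ[k] L) (ι : C →ₗ[k] L),
      (∀ x y : L, ⁅P x, P y⁆ = P (⁅P x, y⁆ + ⁅x, P y⁆)) ∧
      Function.Injective ι ∧
      (∀ x y : C, ι (mul x y) = ⁅P (ι x), ι y⁆) := by
  letI ring := lieRingAux mul hpre
  letI alg := lieAlgebraAux mul hpre
  let e : ULift.{u} (C × C) ≃ₗ[k] C × C := ULift.moduleEquiv
  let P : ULift.{u} (C × C) →ₗ[k] ULift.{u} (C × C) :=
    (e.symm : (C × C) →ₗ[k] ULift.{u} (C × C)) ∘ₗ
      ((LinearMap.inl k C C).comp (LinearMap.snd k C C)) ∘ₗ (e : ULift.{u} (C × C) →ₗ[k] C × C)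
  let ι : C →ₗ[k] ULift.{u} (C × C) :=
    (e.symm : (C × C) →ₗ[k] ULift.{u} (C × C)) ∘ₗ LinearMap.inr k C C
  have hP : ∀ x : ULift.{u} (C × C), P x = ⟨(x.down.2, 0)⟩ := fun x => rfl
  have hι : ∀ c : C, ι c = ⟨(0, c)⟩ := fun c => rfl
  have hBr : ∀ u v : ULift.{u} (C × C),
      ⁅u, v⁆ = (⟨(mul u.down.1 v.down.1 - mul v.down.1 u.down.1,
        mul u.down.1 v.down.2 - mul v.down.1 u.down.2)⟩ : ULift.{u} (C × C)) := fun _ _ => rfl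
  have hAdd : ∀ p q : C × C,
      ((⟨p⟩ + ⟨q⟩ : ULift.{u} (C × C))) = ⟨p + q⟩ := fun _ _ => rfl
  refine ⟨ULift.{u} (C × C), ring, alg, P, ι, ?_, ?_, ?_⟩
  · intro x y
    erw [hP x, hP y, hBr, hBr, hBr, hAdd, hP]
    refine ULift.ext _ _ ?_
    simp [Prod.ext_iff]
    abel
  · intro a b h
    have := congrArg (fun z : ULift.{u} (C × C) => z.down.2) h
    exact this
  · intro x y
    erw [hι x, hι y, hP, hBr]
    refine ULift.ext _ _ ?_
    show (((0:C), mul x y) : C × C)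
      = ((mul ((⟨((0:C), x)⟩ : ULift.{u} (C × C)).down.2) (0:C)
            - mul (0:C) ((⟨((0:C), x)⟩ : ULift.{u} (C × C)).down.2),
          mul ((⟨((0:C), x)⟩ : ULift.{u} (C × C)).down.2) y - mul (0:C) (0:C)) : C × C)
    simp
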